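/- For every complex z with |z| < 1: 4 * Li_{3,1}(z) + 2 * Li_{2,2}(z) = Li_2(z)^2. -/

import Mathlib

open scoped BigOperators

/-- Multiple polylogarithm `Li_{s_1,...,s_l}(z) = ∑_{n_1 > ... > n_l ≥ 1} z^{n_1}/(n_1^{s_1}⋯n_l^{s_l})`. -/
noncomputable def multiLi (s : List ℕ) (z : ℂ) : ℂ :=
  ∑' f : {f : Fin s.length → ℕ // StrictAnti f ∧ ∀ i, 1 ≤ f i},
    (if h : 0 < s.length then z ^ f.1 ⟨0, h⟩ else 1) /
      ∏ i, (f.1 i : ℂ) ^ s.get i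

section Aux

/-- Partial sum `∑_{m=1}^{n-1} 1/m^b`. -/
noncomputable def Sb (b n : ℕ) : ℂ := ∑ m ∈ Finset.Ico 1 n, (1:ℂ)/(m:ℂ)^b

/-- The double-polylog summand, extended by zero to all pairs. -/
noncomputable def Fp (z : ℂ) (a b : ℕ) : ℕ × ℕ → ℂ :=
  fun p => if p.2 < p.1 ∧ 1 ≤ p.2 then z ^ p.1 / ((p.1:ℂ)^a * (p.2:ℂ)^b) else 0

/-- the equiv between pairs and Fin-2 sequences -/
def pairEquiv : {p : ℕ × ℕ // p.2 < p.1 ∧ 1 ≤ p.2} ≃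
    {f : Fin 2 → ℕ // StrictAnti f ∧ ∀ i, 1 ≤ f i} where
  toFun p := ⟨![p.1.1, p.1.2], by
    obtain ⟨⟨n, m⟩, h1, h2⟩ := p
    constructor
    · intro i j hij
      fin_cases i <;> fin_cases j <;> simp_all
    · intro i; fin_cases i <;> simp <;> omega⟩
  invFun f := ⟨(f.1 0, f.1 1), by
    obtain ⟨f, h1, h2⟩ := f
    exact ⟨h1 (by decide : (0:Fin 2) < 1), h2 1⟩⟩
  left_inv p := by ext <;> simp
  right_inv f := by
    ext i
    fin_cases i <;> simp

lemma multiLi_pair (z : ℂ) (a b : ℕ) :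
    multiLi [a, b] z = ∑' p : ℕ × ℕ, Fp z a b p := by
  have h1 : multiLi [a, b] z = ∑' f : {f : Fin 2 → ℕ // StrictAnti f ∧ ∀ i, 1 ≤ f i},
      z ^ f.1 0 / ((f.1 0 : ℂ) ^ a * (f.1 1 : ℂ) ^ b) := by
    rw [multiLi]
    exact tsum_congr fun f => by
      show (if h : 0 < 2 then z ^ f.1 ⟨0, h⟩ else 1) /
          ∏ i : Fin 2, (f.1 i : ℂ) ^ [a, b].get i = _
      rw [dif_pos (by norm_num), Fin.prod_univ_two]
      rfl
  rw [h1, ← pairEquiv.tsum_eq, ← tsum_subtype_eq_of_support_subset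
    (s := {p : ℕ × ℕ | p.2 < p.1 ∧ 1 ≤ p.2}) (f := Fp z a b)
    (by intro p hp
        simp only [Function.mem_support, Fp] at hp
        by_contra h
        exact hp (if_neg h))]
  apply tsum_congr
  rintro ⟨⟨n, m⟩, hnm, hm⟩
  simp only [pairEquiv, Equiv.coe_fn_mk, Fp]
  rw [if_pos ⟨hnm, hm⟩]
  rfl

lemma summable_aux (z : ℂ) (hz : ‖z‖ < 1) :
    Summable (fun p : ℕ × ℕ => if p.2 < p.1 then ‖z‖ ^ p.1 else 0) := by
  rw [summable_prod_of_nonneg (by intro p; dsimp; positivity)]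
  constructor
  · intro n
    apply summable_of_ne_finset_zero (s := Finset.range n)
    intro m hm
    rw [if_neg (by simpa using hm)]
  · have key : ∀ n : ℕ, (∑' m : ℕ, if m < n then ‖z‖ ^ n else 0) = (n : ℝ) * ‖z‖ ^ n := by
      intro n
      rw [tsum_eq_sum (s := Finset.range n) (by intro m hm; rw [if_neg (by simpa using hm)])]
      rw [Finset.sum_congr rfl (fun m hm => if_pos (by simpa using hm)), Finset.sum_const,
        Finset.card_range, nsmul_eq_mul]
    simp only [key]
    simpa using summable_pow_mul_geometric_of_norm_lt_one (R := ℝ) 1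
      (by rw [Real.norm_eq_abs, abs_of_nonneg]; exacts [hz, norm_nonneg z])

lemma norm_bound (z : ℂ) {n m a b : ℕ} (hn : 1 ≤ n) (hm : 1 ≤ m) :
    ‖z ^ n / ((n:ℂ)^a * (m:ℂ)^b)‖ ≤ ‖z‖ ^ n := by
  rw [norm_div, norm_pow, norm_mul, norm_pow, norm_pow, Complex.norm_natCast,
    Complex.norm_natCast]
  apply div_le_self (by positivity)
  have h1 : 1 ≤ n ^ a * m ^ b :=
    Nat.one_le_iff_ne_zero.2 (by positivity)
  exact_mod_cast h1

lemma summable_Fp (z : ℂ) (hz : ‖z‖ < 1) (a b : ℕ) : Summable (Fp z a b) := by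
  apply Summable.of_norm_bounded (summable_aux z hz)
  rintro ⟨n, m⟩
  dsimp only [Fp]
  split_ifs with h1 h2 h2
  · exact norm_bound z (le_trans h1.2 (le_of_lt h1.1)) h1.2
  · exact absurd h1.1 h2
  · simp
  · simp

lemma summable_normL (z : ℂ) (hz : ‖z‖ < 1) :
    Summable fun n : ℕ => ‖z ^ n / (n:ℂ)^2‖ := by
  apply Summable.of_nonneg_of_le (fun n => norm_nonneg _) _
    (summable_geometric_of_lt_one (norm_nonneg z) hz)
  intro n
  rcases Nat.eq_zero_or_pos n with h | h
  · subst h; simp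
  · have := norm_bound (a := 2) (b := 0) (m := n) z h h
    simpa using this

lemma row_summable (z : ℂ) (a b n : ℕ) : Summable fun m => Fp z a b (n, m) :=
  summable_of_ne_finset_zero (s := Finset.range n)
    (fun m hm => if_neg (fun h => (by simpa using hm : ¬ m < n) h.1))

lemma row_tsum (z : ℂ) (a b n : ℕ) :
    ∑' m, Fp z a b (n, m) = z ^ n / (n:ℂ)^a * Sb b n := by
  rw [tsum_eq_sum (s := Finset.Ico 1 n) (fun m hm => by
    rw [Finset.mem_Ico] at hm
    exact if_neg (fun h => hm ⟨h.2, h.1⟩))]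
  rw [Sb, Finset.mul_sum]
  apply Finset.sum_congr rfl
  intro m hm
  rw [Finset.mem_Ico] at hm
  rw [Fp, if_pos ⟨hm.2, hm.1⟩, div_mul_div_comm, mul_one]

lemma tsum_Fp (z : ℂ) {a b : ℕ} (hz : Summable (Fp z a b)) :
    ∑' p, Fp z a b p = ∑' n : ℕ, z ^ n / (n:ℂ)^a * Sb b n := by
  rw [Summable.tsum_prod' hz (fun n => row_summable z a b n)]
  exact tsum_congr (row_tsum z a b)

lemma summable_rows (z : ℂ) {a b : ℕ} (hz : Summable (Fp z a b)) :
    Summable fun n : ℕ => z ^ n / (n:ℂ)^a * Sb b n := by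
  have := hz.hasSum.prod_fiberwise (g := fun n : ℕ => z ^ n / (n:ℂ)^a * Sb b n)
    (fun n => by
      show HasSum _ (z ^ n / (n:ℂ)^a * Sb b n)
      rw [← row_tsum z a b n]
      exact (row_summable z a b n).hasSum)
  exact this.summable

def singleEquiv : {n : ℕ // 1 ≤ n} ≃ {f : Fin 1 → ℕ // StrictAnti f ∧ ∀ i, 1 ≤ f i} where
  toFun n := ⟨fun _ => n.1, ⟨fun i j hij => absurd (Subsingleton.elim i j) (ne_of_lt hij),
    fun _ => n.2⟩⟩
  invFun f := ⟨f.1 0, f.2.2 0⟩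
  left_inv n := rfl
  right_inv f := by ext i; fin_cases i; rfl

lemma multiLi_single (z : ℂ) : multiLi [2] z = ∑' n : ℕ, z ^ n / (n:ℂ)^2 := by
  have h1 : multiLi [2] z = ∑' f : {f : Fin 1 → ℕ // StrictAnti f ∧ ∀ i, 1 ≤ f i},
      z ^ f.1 0 / (f.1 0 : ℂ) ^ 2 := by
    rw [multiLi]
    exact tsum_congr fun f => by
      show (if h : 0 < 1 then z ^ f.1 ⟨0, h⟩ else 1) /
          ∏ i : Fin 1, (f.1 i : ℂ) ^ [2].get i = _
      rw [dif_pos (by norm_num), Fin.prod_univ_one]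
      rfl
  rw [h1, ← singleEquiv.tsum_eq, ← tsum_subtype_eq_of_support_subset
    (s := {n : ℕ | 1 ≤ n}) (f := fun n : ℕ => z ^ n / (n:ℂ)^2)
    (by intro n hn
        simp only [Function.mem_support] at hn
        by_contra h
        have : n = 0 := by simpa using h
        subst this
        simp at hn)]
  exact tsum_congr fun n => rfl

lemma reflect {M : Type*} [AddCommMonoid M] (N : ℕ) (f : ℕ → M) :
    ∑ k ∈ Finset.Ico 1 N, f (N - k) = ∑ k ∈ Finset.Ico 1 N, f k := by
  apply Finset.sum_nbij' (i := fun k => N - k) (j := fun k => N - k) <;>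
    simp only [Finset.mem_Ico] <;> intros <;> first | omega | rfl | trivial

lemma pfrac (k m : ℂ) (hk : k ≠ 0) (hm : m ≠ 0) (hN : k + m ≠ 0) :
    (1:ℂ)/(k^2*m^2) = 1/((k+m)^2*k^2) + 1/((k+m)^2*m^2) + 2/((k+m)^3*k) + 2/((k+m)^3*m) := by
  have h1 : (1:ℂ)/((k+m)^2*k^2) + 1/((k+m)^2*m^2) = (m^2+k^2)/((k+m)^2*(k^2*m^2)) := by
    field_simp
  have h2 : (2:ℂ)/((k+m)^3*k) + 2/((k+m)^3*m) = 2/((k+m)^2*(k*m)) := by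
    rw [div_add_div _ _ (mul_ne_zero (pow_ne_zero _ hN) hk) (mul_ne_zero (pow_ne_zero _ hN) hm),
      div_eq_div_iff (mul_ne_zero (mul_ne_zero (pow_ne_zero _ hN) hk)
        (mul_ne_zero (pow_ne_zero _ hN) hm))
        (mul_ne_zero (pow_ne_zero _ hN) (mul_ne_zero hk hm))]
    ring
  have hk2 : k ^ 2 ≠ 0 := pow_ne_zero _ hk
  have hm2 : m ^ 2 ≠ 0 := pow_ne_zero _ hm
  have hD1 : (k+m) ^ 2 * (k ^ 2 * m ^ 2) ≠ 0 :=
    mul_ne_zero (pow_ne_zero _ hN) (mul_ne_zero hk2 hm2)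
  have hD2 : (k+m) ^ 2 * (k * m) ≠ 0 :=
    mul_ne_zero (pow_ne_zero _ hN) (mul_ne_zero hk hm)
  rw [add_assoc, h1, h2, div_add_div _ _ hD1 hD2,
    div_eq_div_iff (mul_ne_zero hk2 hm2) (mul_ne_zero hD1 hD2)]
  ring

lemma antidiag_sum (z : ℂ) (N : ℕ) :
    ∑ p ∈ Finset.HasAntidiagonal.antidiagonal N, z ^ p.1 / (p.1:ℂ)^2 * (z ^ p.2 / (p.2:ℂ)^2)
      = 4 * (z ^ N / (N:ℂ)^3 * Sb 1 N) + 2 * (z ^ N / (N:ℂ)^2 * Sb 2 N) := by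
  rcases Nat.eq_zero_or_pos N with rfl | hN
  · simp [Sb]
  rw [Finset.Nat.sum_antidiagonal_eq_sum_range_succ_mk]
  rw [← Finset.sum_subset (s₁ := Finset.Ico 1 N)
      (by intro k hk; rw [Finset.mem_Ico] at hk; simp only [Finset.mem_range]; omega)
      (by intro k hk hk'
          rw [Finset.mem_range] at hk
          rw [Finset.mem_Ico] at hk'
          have : k = 0 ∨ k = N := by omega
          rcases this with rfl | rfl
          · simp
          · simp)]
  have hNC : (N:ℂ) ≠ 0 := Nat.cast_ne_zero.2 (by omega)
  have step : ∀ k ∈ Finset.Ico 1 N,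
      z ^ k / (k:ℂ)^2 * (z ^ (N - k) / ((N - k : ℕ):ℂ)^2)
        = z ^ N * (1/((N:ℂ)^2*(k:ℂ)^2) + 1/((N:ℂ)^2*((N - k:ℕ):ℂ)^2)
            + 2/((N:ℂ)^3*(k:ℂ)) + 2/((N:ℂ)^3*((N - k:ℕ):ℂ))) := by
    intro k hk
    rw [Finset.mem_Ico] at hk
    have hkN : k ≤ N := le_of_lt hk.2
    have hkC : (k:ℂ) ≠ 0 := Nat.cast_ne_zero.2 (by omega)
    have hmC : ((N - k : ℕ):ℂ) ≠ 0 := Nat.cast_ne_zero.2 (by omega)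
    have hkm : (k:ℂ) + ((N - k : ℕ):ℂ) = (N:ℂ) := by
      push_cast [hkN]
      ring
    rw [div_mul_div_comm, ← pow_add, Nat.add_sub_cancel' hkN, div_eq_mul_one_div,
      pfrac (k:ℂ) ((N - k : ℕ):ℂ) hkC hmC (by rw [hkm]; exact hNC), hkm]
  rw [Finset.sum_congr rfl step, ← Finset.mul_sum]
  rw [Finset.sum_add_distrib, Finset.sum_add_distrib, Finset.sum_add_distrib]
  rw [reflect N (fun j => (1:ℂ)/((N:ℂ)^2*(j:ℂ)^2)), reflect N (fun j => (2:ℂ)/((N:ℂ)^3*(j:ℂ)))]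
  have e1 : ∀ k : ℕ, (1:ℂ)/((N:ℂ)^2*(k:ℂ)^2) = 1/(N:ℂ)^2 * (1/(k:ℂ)^2) := fun k => by ring
  have e2 : ∀ k : ℕ, (2:ℂ)/((N:ℂ)^3*(k:ℂ)) = 2/(N:ℂ)^3 * (1/(k:ℂ)^1) := fun k => by ring
  simp only [e1, e2, ← Finset.mul_sum]
  have s1 : ∑ k ∈ Finset.Ico 1 N, (1:ℂ)/(k:ℂ)^1 = Sb 1 N := rfl
  have s2 : ∑ k ∈ Finset.Ico 1 N, (1:ℂ)/(k:ℂ)^2 = Sb 2 N := rfl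
  rw [s1, s2]
  ring

end Aux

theorem multiLi_weight_four (z : ℂ) (hz : ‖z‖ < 1) :
    4 * multiLi [3, 1] z + 2 * multiLi [2, 2] z = multiLi [2] z ^ 2 := by
  rw [multiLi_pair z 3 1, multiLi_pair z 2 2, multiLi_single z,
    tsum_Fp z (summable_Fp z hz 3 1), tsum_Fp z (summable_Fp z hz 2 2)]
  rw [sq, tsum_mul_tsum_eq_tsum_sum_antidiagonal_of_summable_norm
    (summable_normL z hz) (summable_normL z hz)]
  rw [← tsum_mul_left, ← tsum_mul_left,
    ← Summable.tsum_add ((summable_rows z (summable_Fp z hz 3 1)).mul_left 4)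
      ((summable_rows z (summable_Fp z hz 2 2)).mul_left 2)]
  exact tsum_congr fun N => (antidiag_sum z N).symm
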